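/- Let n be a positive integer such that sup_{λ ∈ (0,1]} ψ(λ) > 1/n. Then there exists a unique β > 0 satisfying the fixed-point equation β = ψ*(β) − 1/n. -/

import Mathlib

/-- `ψ(λ) = 1 - log₂((2p)^λ + (2p̄)^λ)` where `p̄ = 1 - p`; powers are real powers. -/
noncomputable def psi (p lam : ℝ) : ℝ :=
  1 - Real.logb 2 ((2 * p) ^ lam + (2 * (1 - p)) ^ lam)

/-- `ψ*(β) = sup_{λ > 0} (ψ(λ) - λ β)`. -/
noncomputable def psiStar (p β : ℝ) : ℝ :=
  sSup {y : ℝ | ∃ lam : ℝ, 0 < lam ∧ y = psi p lam - lam * β}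

section aux

variable {p : ℝ}

lemma psi_lt_one (hp0 : 0 < p) (hp : p < 1 / 2) {l : ℝ} (hl : 0 < l) : psi p l < 1 := by
  have ha : (0:ℝ) < (2 * p) ^ l := Real.rpow_pos_of_pos (by linarith) l
  have hb : (1:ℝ) < (2 * (1 - p)) ^ l := by
    rw [Real.one_lt_rpow_iff_of_pos (by linarith)]
    exact Or.inl ⟨by linarith, hl⟩
  have hsum : (1:ℝ) < (2 * p) ^ l + (2 * (1 - p)) ^ l := by linarith
  have := Real.logb_pos one_lt_two hsum
  simp only [psi]
  linarith

lemma S_nonempty (p β : ℝ) :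
    {y : ℝ | ∃ lam : ℝ, 0 < lam ∧ y = psi p lam - lam * β}.Nonempty :=
  ⟨psi p 1 - 1 * β, 1, one_pos, rfl⟩

lemma S_bddAbove (hp0 : 0 < p) (hp : p < 1 / 2) {β : ℝ} (hβ : 0 ≤ β) :
    BddAbove {y : ℝ | ∃ lam : ℝ, 0 < lam ∧ y = psi p lam - lam * β} := by
  refine ⟨1, fun y hy => ?_⟩
  obtain ⟨l, hl, rfl⟩ := hy
  have h1 := psi_lt_one hp0 hp hl
  nlinarith

lemma le_psiStar (hp0 : 0 < p) (hp : p < 1 / 2) {β : ℝ} (hβ : 0 ≤ β) {l : ℝ} (hl : 0 < l) :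
    psi p l - l * β ≤ psiStar p β :=
  le_csSup (S_bddAbove hp0 hp hβ) ⟨l, hl, rfl⟩

lemma psiStar_le_one (hp0 : 0 < p) (hp : p < 1 / 2) {β : ℝ} (hβ : 0 ≤ β) :
    psiStar p β ≤ 1 := by
  refine csSup_le (S_nonempty p β) ?_
  rintro y ⟨l, hl, rfl⟩
  have h1 := psi_lt_one hp0 hp hl
  nlinarith

lemma psiStar_anti (hp0 : 0 < p) (hp : p < 1 / 2) {β₁ β₂ : ℝ} (h1 : 0 ≤ β₁) (h12 : β₁ ≤ β₂) :
    psiStar p β₂ ≤ psiStar p β₁ := by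
  refine csSup_le (S_nonempty p β₂) ?_
  rintro y ⟨l, hl, rfl⟩
  have := le_psiStar hp0 hp h1 hl
  nlinarith

lemma psiStar_nonneg (hp0 : 0 < p) (hp : p < 1 / 2) {β : ℝ} (hβ : 0 ≤ β) :
    0 ≤ psiStar p β := by
  by_contra h
  push_neg at h
  set F : ℝ → ℝ := fun l => psi p l - l * β with hF
  have hcont : ContinuousAt F 0 := by
    have ha : (2 * p : ℝ) ≠ 0 := by positivity
    have hb : (2 * (1 - p) : ℝ) ≠ 0 := by
      have : (0:ℝ) < 2 * (1 - p) := by linarith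
      exact this.ne'
    have hsum : ContinuousAt (fun l : ℝ => (2 * p) ^ l + (2 * (1 - p)) ^ l) 0 :=
      (Real.continuousAt_const_rpow ha).add (Real.continuousAt_const_rpow hb)
    have hval : ((fun l : ℝ => (2 * p) ^ l + (2 * (1 - p)) ^ l) 0) ≠ 0 := by
      simp only [Real.rpow_zero]
      norm_num
    have hlog' := ContinuousAt.comp (f := fun l : ℝ => (2 * p) ^ l + (2 * (1 - p)) ^ l)
      (Real.continuousAt_logb (b := 2) hval) hsum
    have hlog : ContinuousAt (fun l : ℝ => Real.logb 2 ((2 * p) ^ l + (2 * (1 - p)) ^ l)) 0 :=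
      hlog'
    have : ContinuousAt (fun l : ℝ => psi p l) 0 :=
      continuousAt_const.sub hlog
    exact this.sub (continuousAt_id.mul continuousAt_const)
  have hF0 : F 0 = 0 := by
    simp only [hF, psi, Real.rpow_zero]
    norm_num [Real.logb_self_eq_one (by norm_num : (1:ℝ) < 2)]
  rw [Metric.continuousAt_iff] at hcont
  obtain ⟨δ, hδ, hd⟩ := hcont (-psiStar p β) (by linarith)
  have hldist : dist (δ/2) (0:ℝ) < δ := by
    rw [Real.dist_eq]
    rw [abs_of_pos (by linarith)]
    linarith
  have := hd hldist
  rw [hF0, Real.dist_eq, sub_zero] at this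
  have hFl : F (δ/2) ≤ psiStar p β := le_psiStar hp0 hp hβ (by linarith)
  have := abs_lt.mp this
  linarith [this.1]

lemma psiStar_lip (hp0 : 0 < p) (hp : p < 1 / 2) {β₀ β₁ β₂ : ℝ} (h0 : 0 < β₀)
    (h1 : β₀ ≤ β₁) (h12 : β₁ ≤ β₂) :
    psiStar p β₁ ≤ psiStar p β₂ + (β₂ - β₁) / β₀ := by
  have hβ₂ : (0:ℝ) ≤ β₂ := by linarith
  have hnn := psiStar_nonneg hp0 hp hβ₂
  refine csSup_le (S_nonempty p β₁) ?_
  rintro y ⟨l, hl, rfl⟩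
  rcases le_or_gt l (1 / β₀) with hle | hgt
  · have := le_psiStar hp0 hp hβ₂ hl
    have hdiv : (β₂ - β₁) / β₀ = (1 / β₀) * (β₂ - β₁) := by ring
    nlinarith
  · have h1' := psi_lt_one hp0 hp hl
    have hlb : 1 ≤ l * β₁ := by
      have : 1 / β₀ * β₀ = 1 := by field_simp
      nlinarith
    have hdnn : 0 ≤ (β₂ - β₁) / β₀ := div_nonneg (by linarith) h0.le
    nlinarith

end aux

theorem stmt_5 (p : ℝ) (hp0 : 0 < p) (hp : p < 1 / 2) (n : ℕ) (hn : 0 < n)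
    (hsup : (1 : ℝ) / n < sSup {y : ℝ | ∃ lam : ℝ, 0 < lam ∧ lam ≤ 1 ∧ y = psi p lam}) :
    ∃! β : ℝ, 0 < β ∧ β = psiStar p β - 1 / n := by
  have hn' : (0:ℝ) < 1 / n := by positivity
  -- extract λ̂ with ψ(λ̂) > 1/n
  have hTne : Set.Nonempty {y : ℝ | ∃ lam : ℝ, 0 < lam ∧ lam ≤ 1 ∧ y = psi p lam} :=
    ⟨psi p 1, 1, one_pos, le_refl 1, rfl⟩
  obtain ⟨y, hy, hylt⟩ := exists_lt_of_lt_csSup hTne hsup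
  obtain ⟨l, hl0, hl1, rfl⟩ := hy
  set c : ℝ := psi p l - 1 / n with hc
  have hcpos : 0 < c := by simp only [hc]; linarith
  have hclt : c < 1 := by
    have := psi_lt_one hp0 hp hl0
    simp only [hc]; linarith
  set β₀ : ℝ := c / (2 * (1 + l)) with hβ₀
  have hβ₀pos : 0 < β₀ := by
    have : (0:ℝ) < 2 * (1 + l) := by linarith
    positivity
  have hβ₀eq : β₀ * (1 + l) = c / 2 := by
    rw [hβ₀, div_mul_eq_mul_div, div_eq_div_iff (ne_of_gt (by linarith)) (by norm_num)]
    ring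
  have hβ₀le : β₀ ≤ 2 := by
    rw [hβ₀, div_le_iff₀ (by linarith)]
    nlinarith
  set g : ℝ → ℝ := fun β => β - psiStar p β with hg
  -- continuity of g on [β₀, 2]
  have hgcont : ContinuousOn g (Set.Icc β₀ 2) := by
    have hlip : LipschitzOnWith (Real.toNNReal (1 / β₀)) (psiStar p) (Set.Icc β₀ 2) := by
      refine LipschitzOnWith.of_dist_le_mul ?_
      intro x hx y hy
      simp only [Set.mem_Icc] at hx hy
      have hcoe : ((Real.toNNReal (1 / β₀)) : ℝ) = 1 / β₀ :=
        Real.coe_toNNReal _ (by positivity)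
      rw [hcoe, Real.dist_eq, Real.dist_eq]
      rcases le_total x y with hxy | hxy
      · have h1 := psiStar_anti hp0 hp (by linarith : (0:ℝ) ≤ x) hxy
        have h2 := psiStar_lip hp0 hp hβ₀pos hx.1 hxy
        rw [abs_of_nonneg (by linarith), abs_of_nonpos (by linarith)]
        have : (y - x) / β₀ = 1 / β₀ * (y - x) := by ring
        linarith
      · have h1 := psiStar_anti hp0 hp (by linarith : (0:ℝ) ≤ y) hxy
        have h2 := psiStar_lip hp0 hp hβ₀pos hy.1 hxy
        rw [abs_of_nonpos (by linarith), abs_of_nonneg (by linarith)]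
        have : (x - y) / β₀ = 1 / β₀ * (x - y) := by ring
        linarith
    exact (continuousOn_id).sub hlip.continuousOn
  -- endpoint values
  have hg1 : g β₀ ≤ -(1 / n) := by
    have := le_psiStar hp0 hp (le_of_lt hβ₀pos) hl0
    simp only [hg, hc] at *
    nlinarith
  have hg2 : -(1 / n) ≤ g 2 := by
    have := psiStar_le_one hp0 hp (by norm_num : (0:ℝ) ≤ 2)
    simp only [hg]
    linarith
  obtain ⟨β, hβmem, hβval⟩ := intermediate_value_Icc hβ₀le hgcont ⟨hg1, hg2⟩
  have hβpos : 0 < β := lt_of_lt_of_le hβ₀pos hβmem.1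
  have hβfix : β = psiStar p β - 1 / n := by
    simp only [hg] at hβval
    linarith
  refine ⟨β, ⟨hβpos, hβfix⟩, ?_⟩
  rintro y ⟨hy0, hyfix⟩
  rcases le_total y β with h | h
  · have := psiStar_anti hp0 hp hy0.le h
    linarith
  · have := psiStar_anti hp0 hp hβpos.le h
    linarith
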